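/- arXiv:1310.1115 — 2 statements merged into one kernel-verified Lean document; each statement's English description precedes it below -/
import Mathlib

section
/- Let Ω ⊆ ℝ^d be closed, 1 ≤ q_r < q_a ≤ 2, and ω a probability measure on Ω with finite q_a-th moment. Then for every probability measure μ on Ω with finite q_r-th moment, the energy E[μ] = ∫∫ |x-y|^{q_a} dω dμ - (1/2)∫∫ |x-y|^{q_r} dμ dμ satisfies the moment bound: there exist constants M > 0, c > 0 and C ≥ 0 (depending only on q_a, q_r, ω) such that ∫ |x|^{q_a} dμ(x) ≤ M^{q_a} + (2/c)(E[μ] + ∫ |x|^{q_a} dω(x)). In particular the sublevels of E have uniformly bounded q_a-th moments. -/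
open MeasureTheory

private lemma aux_rpow_add {a b p : ℝ} (ha : 0 ≤ a) (hb : 0 ≤ b) (hp : 1 ≤ p) :
    (a + b) ^ p ≤ 2 ^ (p - 1) * (a ^ p + b ^ p) := by
  have h := NNReal.rpow_add_le_mul_rpow_add_rpow (⟨a, ha⟩ : NNReal) (⟨b, hb⟩ : NNReal) hp
  have h2 := NNReal.coe_le_coe.2 h
  push_cast [NNReal.coe_rpow] at h2
  convert h2 using 3 <;> norm_num <;> rfl

theorem stmt_9 (d : ℕ) (Ω : Set (EuclideanSpace ℝ (Fin d))) (hΩ : IsClosed Ω)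
    (qr qa : ℝ) (h1 : 1 ≤ qr) (h2 : qr < qa) (h3 : qa ≤ 2)
    (ω : Measure (EuclideanSpace ℝ (Fin d))) [IsProbabilityMeasure ω]
    (hωΩ : ω Ωᶜ = 0)
    (hωmom : ∫⁻ x, ENNReal.ofReal (‖x‖ ^ qa) ∂ω < ⊤) :
    ∃ M > (0:ℝ), ∃ c > (0:ℝ),
      ∀ μ : Measure (EuclideanSpace ℝ (Fin d)),
        IsProbabilityMeasure μ → μ Ωᶜ = 0 →
        (∫⁻ x, ENNReal.ofReal (‖x‖ ^ qr) ∂μ) < ⊤ →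
        (∫⁻ x, ENNReal.ofReal (‖x‖ ^ qa) ∂μ) ≤
          ENNReal.ofReal (M ^ qa) + ENNReal.ofReal (2 / c) *
            (((∫⁻ y, ∫⁻ x, ENNReal.ofReal (‖x - y‖ ^ qa) ∂ω ∂μ)
                - (1 / 2) * ∫⁻ x, ∫⁻ y, ENNReal.ofReal (‖x - y‖ ^ qr) ∂μ ∂μ)
              + ∫⁻ x, ENNReal.ofReal (‖x‖ ^ qa) ∂ω) := by
  have hqa0 : (0:ℝ) < qa := by linarith
  have hqr0 : (0:ℝ) < qr := by linarith
  have hd : (0:ℝ) < qa - qr := by linarith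
  set M : ℝ := 2 ^ ((qr + qa - 1) / (qa - qr)) with hMdef
  have hMpos : 0 < M := Real.rpow_pos_of_pos two_pos _
  set c : ℝ := 2 ^ (-qa) with hcdef
  have hcpos : 0 < c := Real.rpow_pos_of_pos two_pos _
  -- key exponent identities
  have hMr : M ^ (qr - qa) = (2:ℝ) ^ (1 - qr - qa) := by
    rw [hMdef, ← Real.rpow_mul (by norm_num : (0:ℝ) ≤ 2)]
    congr 1
    field_simp
    ring
  have key1 : (2:ℝ) ^ (qr - 1) * M ^ (qr - qa) = c := by
    rw [hMr, ← Real.rpow_add two_pos, hcdef]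
    congr 1
    ring
  have key2 : c * M ^ qa = 2 ^ (qr - 1) * M ^ qr := by
    rw [← key1, mul_assoc, ← Real.rpow_add hMpos]
    norm_num
  refine ⟨M, hMpos, c, hcpos, ?_⟩
  intro μ hμprob hμΩ hRfin
  -- abbreviations
  set T := ∫⁻ x, ENNReal.ofReal (‖x‖ ^ qa) ∂μ with hT
  set R := ∫⁻ x, ENNReal.ofReal (‖x‖ ^ qr) ∂μ with hR
  set W := ∫⁻ x, ENNReal.ofReal (‖x‖ ^ qa) ∂ω with hW
  set A := ∫⁻ y, ∫⁻ x, ENNReal.ofReal (‖x - y‖ ^ qa) ∂ω ∂μ with hA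
  set B := ∫⁻ x, ∫⁻ y, ENNReal.ofReal (‖x - y‖ ^ qr) ∂μ ∂μ with hB
  have measqa : Measurable fun x : EuclideanSpace ℝ (Fin d) => ENNReal.ofReal (‖x‖ ^ qa) :=
    (((Real.continuous_rpow_const hqa0.le).comp continuous_norm).measurable).ennreal_ofReal
  have measqr : Measurable fun x : EuclideanSpace ℝ (Fin d) => ENNReal.ofReal (‖x‖ ^ qr) :=
    (((Real.continuous_rpow_const hqr0.le).comp continuous_norm).measurable).ennreal_ofReal
  -- Step 1 : ofReal (2^(1-qa)) * T ≤ A + W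
  have step1 : ENNReal.ofReal (2 ^ (1 - qa)) * T ≤ A + W := by
    have hpt : ∀ y : EuclideanSpace ℝ (Fin d),
        ENNReal.ofReal (2 ^ (1 - qa)) * ENNReal.ofReal (‖y‖ ^ qa) ≤
          (∫⁻ x, ENNReal.ofReal (‖x - y‖ ^ qa) ∂ω) + W := by
      intro y
      have hineq : ∀ x : EuclideanSpace ℝ (Fin d),
          2 ^ (1 - qa) * ‖y‖ ^ qa ≤ ‖x - y‖ ^ qa + ‖x‖ ^ qa := by
        intro x
        have h0 : ‖y‖ ≤ ‖x - y‖ + ‖x‖ := by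
          have : y = x - (x - y) := by abel
          calc ‖y‖ = ‖x - (x - y)‖ := by rw [← this]
            _ ≤ ‖x‖ + ‖x - y‖ := norm_sub_le _ _
            _ = ‖x - y‖ + ‖x‖ := by ring
        have h1 : ‖y‖ ^ qa ≤ (‖x - y‖ + ‖x‖) ^ qa :=
          Real.rpow_le_rpow (norm_nonneg _) h0 hqa0.le
        have h2 : (‖x - y‖ + ‖x‖) ^ qa ≤ 2 ^ (qa - 1) * (‖x - y‖ ^ qa + ‖x‖ ^ qa) :=
          aux_rpow_add (norm_nonneg _) (norm_nonneg _) (by linarith)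
        have hprod : (2:ℝ) ^ (1 - qa) * 2 ^ (qa - 1) = 1 := by
          rw [← Real.rpow_add two_pos]; norm_num
        have hpos : (0:ℝ) < 2 ^ (1 - qa) := Real.rpow_pos_of_pos two_pos _
        calc 2 ^ (1 - qa) * ‖y‖ ^ qa
            ≤ 2 ^ (1 - qa) * (2 ^ (qa - 1) * (‖x - y‖ ^ qa + ‖x‖ ^ qa)) :=
              mul_le_mul_of_nonneg_left (h1.trans h2) hpos.le
          _ = (2 ^ (1 - qa) * 2 ^ (qa - 1)) * (‖x - y‖ ^ qa + ‖x‖ ^ qa) := by ring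
          _ = ‖x - y‖ ^ qa + ‖x‖ ^ qa := by rw [hprod, one_mul]
      calc ENNReal.ofReal (2 ^ (1 - qa)) * ENNReal.ofReal (‖y‖ ^ qa)
          = ∫⁻ _, ENNReal.ofReal (2 ^ (1 - qa) * ‖y‖ ^ qa) ∂ω := by
            rw [lintegral_const, measure_univ, mul_one,
              ENNReal.ofReal_mul (Real.rpow_pos_of_pos two_pos _).le]
        _ ≤ ∫⁻ x, (ENNReal.ofReal (‖x - y‖ ^ qa) + ENNReal.ofReal (‖x‖ ^ qa)) ∂ω := by
            refine lintegral_mono fun x => ?_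
            rw [← ENNReal.ofReal_add (Real.rpow_nonneg (norm_nonneg _) _)
              (Real.rpow_nonneg (norm_nonneg _) _)]
            exact ENNReal.ofReal_le_ofReal (hineq x)
        _ = (∫⁻ x, ENNReal.ofReal (‖x - y‖ ^ qa) ∂ω) + W := by
            rw [lintegral_add_right _ measqa, hW]
    calc ENNReal.ofReal (2 ^ (1 - qa)) * T
        = ∫⁻ y, ENNReal.ofReal (2 ^ (1 - qa)) * ENNReal.ofReal (‖y‖ ^ qa) ∂μ := by
          rw [hT, lintegral_const_mul _ measqa]
      _ ≤ ∫⁻ y, ((∫⁻ x, ENNReal.ofReal (‖x - y‖ ^ qa) ∂ω) + W) ∂μ := lintegral_mono hpt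
      _ = A + W := by rw [lintegral_add_right _ measurable_const, lintegral_const,
            measure_univ, mul_one, hA]
  -- Step 2 : B ≤ ofReal (2^(qr-1)) * (R + R)
  have step2 : B ≤ ENNReal.ofReal (2 ^ (qr - 1)) * (R + R) := by
    have hpt : ∀ x y : EuclideanSpace ℝ (Fin d),
        ENNReal.ofReal (‖x - y‖ ^ qr) ≤
          ENNReal.ofReal (2 ^ (qr - 1)) *
            (ENNReal.ofReal (‖x‖ ^ qr) + ENNReal.ofReal (‖y‖ ^ qr)) := by
      intro x y
      have h0 : ‖x - y‖ ≤ ‖x‖ + ‖y‖ := norm_sub_le _ _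
      have h1 : ‖x - y‖ ^ qr ≤ (‖x‖ + ‖y‖) ^ qr :=
        Real.rpow_le_rpow (norm_nonneg _) h0 hqr0.le
      have h2 : (‖x‖ + ‖y‖) ^ qr ≤ 2 ^ (qr - 1) * (‖x‖ ^ qr + ‖y‖ ^ qr) :=
        aux_rpow_add (norm_nonneg _) (norm_nonneg _) (by linarith)
      rw [← ENNReal.ofReal_add (Real.rpow_nonneg (norm_nonneg _) _)
        (Real.rpow_nonneg (norm_nonneg _) _),
        ← ENNReal.ofReal_mul (Real.rpow_pos_of_pos two_pos _).le]
      exact ENNReal.ofReal_le_ofReal (h1.trans h2)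
    calc B ≤ ∫⁻ x, (ENNReal.ofReal (2 ^ (qr - 1)) *
            (ENNReal.ofReal (‖x‖ ^ qr) + R)) ∂μ := by
          rw [hB]
          refine lintegral_mono fun x => ?_
          calc ∫⁻ y, ENNReal.ofReal (‖x - y‖ ^ qr) ∂μ
              ≤ ∫⁻ y, ENNReal.ofReal (2 ^ (qr - 1)) *
                  (ENNReal.ofReal (‖x‖ ^ qr) + ENNReal.ofReal (‖y‖ ^ qr)) ∂μ :=
                lintegral_mono (hpt x)
            _ = ENNReal.ofReal (2 ^ (qr - 1)) * (ENNReal.ofReal (‖x‖ ^ qr) + R) := by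
                rw [lintegral_const_mul (f := fun y => ENNReal.ofReal (‖x‖ ^ qr) + ENNReal.ofReal (‖y‖ ^ qr)) _ (measurable_const.add measqr),
                  lintegral_add_right _ measqr, lintegral_const, measure_univ, mul_one, hR]
      _ = ENNReal.ofReal (2 ^ (qr - 1)) * (R + R) := by
          rw [lintegral_const_mul (f := fun x => ENNReal.ofReal (‖x‖ ^ qr) + R) _ (measqr.add measurable_const),
            lintegral_add_right _ measurable_const, lintegral_const, measure_univ, mul_one, hR]
  -- Step 3 : R ≤ ofReal (M^qr) + ofReal (M^(qr-qa)) * T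
  have step3 : R ≤ ENNReal.ofReal (M ^ qr) + ENNReal.ofReal (M ^ (qr - qa)) * T := by
    have hpt : ∀ x : EuclideanSpace ℝ (Fin d),
        ‖x‖ ^ qr ≤ M ^ qr + M ^ (qr - qa) * ‖x‖ ^ qa := by
      intro x
      rcases le_or_gt ‖x‖ M with h | h
      · have h1 : ‖x‖ ^ qr ≤ M ^ qr := Real.rpow_le_rpow (norm_nonneg _) h hqr0.le
        have h2 : 0 ≤ M ^ (qr - qa) * ‖x‖ ^ qa :=
          mul_nonneg (Real.rpow_nonneg hMpos.le _) (Real.rpow_nonneg (norm_nonneg _) _)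
        linarith
      · have hx : 0 < ‖x‖ := hMpos.trans h
        have h1 : ‖x‖ ^ qr = ‖x‖ ^ (qr - qa) * ‖x‖ ^ qa := by
          rw [← Real.rpow_add hx]; norm_num
        have h2 : ‖x‖ ^ (qr - qa) ≤ M ^ (qr - qa) :=
          Real.rpow_le_rpow_of_nonpos hMpos h.le (by linarith)
        have h3 : 0 ≤ ‖x‖ ^ qa := Real.rpow_nonneg (norm_nonneg _) _
        have h4 : 0 ≤ M ^ qr := Real.rpow_nonneg hMpos.le _
        nlinarith [mul_le_mul_of_nonneg_right h2 h3]
    calc R ≤ ∫⁻ x, (ENNReal.ofReal (M ^ qr) +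
            ENNReal.ofReal (M ^ (qr - qa)) * ENNReal.ofReal (‖x‖ ^ qa)) ∂μ := by
          rw [hR]
          refine lintegral_mono fun x => ?_
          rw [← ENNReal.ofReal_mul (Real.rpow_nonneg hMpos.le _),
            ← ENNReal.ofReal_add (Real.rpow_nonneg hMpos.le _)
              (mul_nonneg (Real.rpow_nonneg hMpos.le _) (Real.rpow_nonneg (norm_nonneg _) _))]
          exact ENNReal.ofReal_le_ofReal (hpt x)
      _ = ENNReal.ofReal (M ^ qr) + ENNReal.ofReal (M ^ (qr - qa)) * T := by
          rw [lintegral_add_left measurable_const, lintegral_const, measure_univ, mul_one,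
            lintegral_const_mul _ measqa, hT]
  -- (1/2) * B ≤ ofReal (2^(qr-1)) * R
  have hhalfB : (1 / 2 : ENNReal) * B ≤ ENNReal.ofReal (2 ^ (qr - 1)) * R := by
    have hhalf : (1 / 2 : ENNReal) = ENNReal.ofReal (1 / 2) := by
      rw [ENNReal.ofReal_div_of_pos two_pos]
      norm_num
    calc (1 / 2 : ENNReal) * B
        ≤ (1 / 2 : ENNReal) * (ENNReal.ofReal (2 ^ (qr - 1)) * (R + R)) :=
          mul_le_mul_right step2 _
      _ = (1 / 2 * 2) * (ENNReal.ofReal (2 ^ (qr - 1)) * R) := by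
          rw [← two_mul]; ring
      _ = ENNReal.ofReal (2 ^ (qr - 1)) * R := by
          rw [one_div, ENNReal.inv_mul_cancel (by norm_num) (by norm_num), one_mul]
  -- combination
  have hcomb : ENNReal.ofReal c * T + (1 / 2) * B ≤
      (A + W) + ENNReal.ofReal (c * M ^ qa) := by
    have hBchain : (1 / 2 : ENNReal) * B ≤
        ENNReal.ofReal (c * M ^ qa) + ENNReal.ofReal c * T := by
      calc (1 / 2 : ENNReal) * B ≤ ENNReal.ofReal (2 ^ (qr - 1)) * R := hhalfB
        _ ≤ ENNReal.ofReal (2 ^ (qr - 1)) *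
            (ENNReal.ofReal (M ^ qr) + ENNReal.ofReal (M ^ (qr - qa)) * T) :=
          mul_le_mul_right step3 _
        _ = ENNReal.ofReal (2 ^ (qr - 1) * M ^ qr) +
            ENNReal.ofReal (2 ^ (qr - 1) * M ^ (qr - qa)) * T := by
          rw [mul_add, ← ENNReal.ofReal_mul (Real.rpow_pos_of_pos two_pos _).le,
            ← mul_assoc, ← ENNReal.ofReal_mul (Real.rpow_pos_of_pos two_pos _).le]
        _ = ENNReal.ofReal (c * M ^ qa) + ENNReal.ofReal c * T := by
          rw [key1, ← key2]
    have h2c : (2:ℝ) * c = 2 ^ (1 - qa) := by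
      have h2a := Real.rpow_add two_pos 1 (-qa)
      rw [Real.rpow_one] at h2a
      rw [hcdef, ← h2a]
      ring_nf
    have h2T : ENNReal.ofReal c * T + ENNReal.ofReal c * T =
        ENNReal.ofReal (2 ^ (1 - qa)) * T := by
      rw [← add_mul, ← two_mul, show ((2:ENNReal)) = ENNReal.ofReal 2 by norm_num,
        ← ENNReal.ofReal_mul (by norm_num), h2c]
    calc ENNReal.ofReal c * T + (1 / 2) * B
        ≤ ENNReal.ofReal c * T +
            (ENNReal.ofReal (c * M ^ qa) + ENNReal.ofReal c * T) :=
          add_le_add_right hBchain _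
      _ = ENNReal.ofReal (2 ^ (1 - qa)) * T + ENNReal.ofReal (c * M ^ qa) := by
          rw [← h2T]; ring
      _ ≤ (A + W) + ENNReal.ofReal (c * M ^ qa) := add_le_add_left step1 _
  -- finish
  by_cases hTtop : T = ⊤
  · -- RHS is infinite
    have hBlt : B < ⊤ :=
      step2.trans_lt (by
        refine ENNReal.mul_lt_top ENNReal.ofReal_lt_top ?_
        exact ENNReal.add_lt_top.2 ⟨hRfin, hRfin⟩)
    have hAtop : A = ⊤ := by
      by_contra hA'
      have : ENNReal.ofReal (2 ^ (1 - qa)) * T < ⊤ :=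
        step1.trans_lt (ENNReal.add_lt_top.2 ⟨lt_top_iff_ne_top.2 hA', hωmom⟩)
      rw [hTtop, ENNReal.mul_top (by
        simp [ENNReal.ofReal_eq_zero, not_le, Real.rpow_pos_of_pos two_pos])] at this
      exact (lt_irrefl _ this)
    have hEtop : A - (1 / 2) * B = ⊤ := by
      rw [hAtop]
      exact ENNReal.top_sub (by
        exact ENNReal.mul_ne_top (by norm_num) hBlt.ne)
    rw [hEtop]
    have htw : (⊤ : ENNReal) + W = ⊤ := by simp
    rw [htw, ENNReal.mul_top ((ENNReal.ofReal_pos.2 (div_pos two_pos hcpos)).ne')]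
    exact le_top
  · -- finite case
    have h4 : ENNReal.ofReal c * T ≤ ((A + W) + ENNReal.ofReal (c * M ^ qa)) - (1 / 2) * B :=
      ENNReal.le_sub_of_add_le_right
        (ENNReal.mul_ne_top (by norm_num)
          (step2.trans_lt (ENNReal.mul_lt_top ENNReal.ofReal_lt_top
            (ENNReal.add_lt_top.2 ⟨hRfin, hRfin⟩))).ne) hcomb
    have h5 : ((A + W) + ENNReal.ofReal (c * M ^ qa)) - (1 / 2) * B ≤
        (A - (1 / 2) * B) + W + ENNReal.ofReal (c * M ^ qa) := by
      rw [tsub_le_iff_right]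
      calc (A + W) + ENNReal.ofReal (c * M ^ qa)
          ≤ ((A - (1 / 2) * B) + (1 / 2) * B) + W + ENNReal.ofReal (c * M ^ qa) :=
            add_le_add_left (add_le_add_left le_tsub_add _) _
        _ = (A - (1 / 2) * B) + W + ENNReal.ofReal (c * M ^ qa) + (1 / 2) * B := by ring
    have h6 : ENNReal.ofReal c * T ≤
        ((A - (1 / 2) * B) + W) + ENNReal.ofReal (c * M ^ qa) := by
      refine (h4.trans h5).trans_eq ?_
      ring
    have hcinv : ENNReal.ofReal c⁻¹ * ENNReal.ofReal c = 1 := by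
      rw [← ENNReal.ofReal_mul (by positivity), inv_mul_cancel₀ hcpos.ne']
      exact ENNReal.ofReal_one
    calc T = ENNReal.ofReal c⁻¹ * (ENNReal.ofReal c * T) := by
          rw [← mul_assoc, hcinv, one_mul]
      _ ≤ ENNReal.ofReal c⁻¹ * (((A - (1 / 2) * B) + W) + ENNReal.ofReal (c * M ^ qa)) :=
          mul_le_mul_right h6 _
      _ = ENNReal.ofReal c⁻¹ * ENNReal.ofReal (c * M ^ qa) +
          ENNReal.ofReal c⁻¹ * ((A - (1 / 2) * B) + W) := by ring
      _ = ENNReal.ofReal (M ^ qa) +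
          ENNReal.ofReal c⁻¹ * ((A - (1 / 2) * B) + W) := by
          rw [← ENNReal.ofReal_mul (by positivity), ← mul_assoc,
            inv_mul_cancel₀ hcpos.ne', one_mul]
      _ ≤ ENNReal.ofReal (M ^ qa) +
          ENNReal.ofReal (2 / c) * ((A - (1 / 2) * B) + W) := by
          have hle : c⁻¹ ≤ 2 / c := by
            rw [div_eq_mul_inv]
            nlinarith [inv_pos.2 hcpos]
          exact add_le_add_right (mul_le_mul_left (ENNReal.ofReal_le_ofReal hle) _) _
end

section
/- Let Ω = ℝ, 1 ≤ q_a < q_r ≤ 2, ω the uniform probability measure on [-1, 0], and μ_n the uniform probability measure on [0, n]. Then the attraction term V[μ_n] = ∫∫ |x-y|^{q_a} dω(x) dμ_n(y) satisfies V[μ_n] ≤ (n+1)^{q_a}/(q_a + 1), the repulsion term W[μ_n] = -(1/2)∫∫ |x-y|^{q_r} dμ_n dμ_n equals -n^{q_r}/((q_r+1)(q_r+2)), and consequently E[μ_n] = V[μ_n] + W[μ_n] → -∞ as n → ∞. In particular E has no minimizer over probability measures on ℝ. -/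
open MeasureTheory Filter Topology ENNReal

lemma cont_aux (q c : ℝ) (hq : 0 ≤ q) : Continuous (fun x : ℝ => |x - c| ^ q) :=
  ((continuous_id.sub continuous_const).abs).rpow_const (fun _ => Or.inr hq)

lemma cont_aux' (q c : ℝ) (hq : 0 ≤ q) : Continuous (fun x : ℝ => |c - x| ^ q) :=
  ((continuous_const.sub continuous_id).abs).rpow_const (fun _ => Or.inr hq)

lemma innerV (q y : ℝ) (hq : 1 ≤ q) (hy : 0 ≤ y) :
    ∫ x in Set.Icc (-1:ℝ) 0, |x - y| ^ q = ((y+1)^(q+1) - y^(q+1)) / (q+1) := by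
  rw [MeasureTheory.integral_Icc_eq_integral_Ioc,
    ← intervalIntegral.integral_of_le (by norm_num : (-1:ℝ) ≤ 0)]
  have hcg : ∫ x in (-1:ℝ)..0, |x - y| ^ q = ∫ x in (-1:ℝ)..0, (y - x) ^ q := by
    apply intervalIntegral.integral_congr
    intro x hx
    rw [Set.uIcc_of_le (by norm_num : (-1:ℝ) ≤ 0)] at hx
    simp only
    rw [abs_of_nonpos (by linarith [hx.2]), neg_sub]
  rw [hcg, intervalIntegral.integral_comp_sub_left (fun u => u ^ q) y,
    integral_rpow (Or.inl (by linarith))]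
  norm_num

lemma V_val (q a : ℝ) (hq : 1 ≤ q) (ha : 0 ≤ a) :
    ∫ y in Set.Icc (0:ℝ) a, (((y+1)^(q+1) - y^(q+1)) / (q+1))
      = ((a+1)^(q+2) - a^(q+2) - 1) / ((q+1)*(q+2)) := by
  have hc1 : Continuous (fun y : ℝ => (y+1)^(q+1)) :=
    (continuous_id.add continuous_const).rpow_const (fun _ => Or.inr (by linarith))
  have hc2 : Continuous (fun y : ℝ => y^(q+1)) :=
    continuous_id.rpow_const (fun _ => Or.inr (by linarith))
  rw [MeasureTheory.integral_Icc_eq_integral_Ioc,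
    ← intervalIntegral.integral_of_le ha]
  rw [intervalIntegral.integral_div]
  rw [intervalIntegral.integral_sub (hc1.intervalIntegrable _ _) (hc2.intervalIntegrable _ _)]
  rw [intervalIntegral.integral_comp_add_right (fun u => u ^ (q+1)) 1]
  rw [integral_rpow (Or.inl (by linarith)), integral_rpow (Or.inl (by linarith))]
  have h1 : q + 1 + 1 = q + 2 := by ring
  rw [zero_add, Real.one_rpow, h1]
  rw [Real.zero_rpow (ne_of_gt (by linarith))]
  field_simp
  ring

lemma innerW (q a x : ℝ) (hq : 1 ≤ q) (hx : x ∈ Set.Icc (0:ℝ) a) :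
    ∫ y in Set.Icc (0:ℝ) a, |x - y| ^ q = (x^(q+1) + (a-x)^(q+1)) / (q+1) := by
  obtain ⟨hx0, hxa⟩ := hx
  rw [MeasureTheory.integral_Icc_eq_integral_Ioc,
    ← intervalIntegral.integral_of_le (le_trans hx0 hxa)]
  have hi1 : IntervalIntegrable (fun y : ℝ => |x - y| ^ q) volume 0 x :=
    (((continuous_const.sub continuous_id).abs).rpow_const (fun _ => Or.inr (by linarith))).intervalIntegrable _ _
  have hi2 : IntervalIntegrable (fun y : ℝ => |x - y| ^ q) volume x a :=
    (((continuous_const.sub continuous_id).abs).rpow_const (fun _ => Or.inr (by linarith))).intervalIntegrable _ _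
  rw [← intervalIntegral.integral_add_adjacent_intervals hi1 hi2]
  have e1 : ∫ y in (0:ℝ)..x, |x - y| ^ q = x^(q+1)/(q+1) := by
    have hcg : ∫ y in (0:ℝ)..x, |x - y| ^ q = ∫ y in (0:ℝ)..x, (x - y) ^ q := by
      apply intervalIntegral.integral_congr
      intro y hy
      rw [Set.uIcc_of_le hx0] at hy
      simp only
      rw [abs_of_nonneg (by linarith [hy.2])]
    rw [hcg, intervalIntegral.integral_comp_sub_left (fun u => u ^ q) x,
      integral_rpow (Or.inl (by linarith)), sub_zero, sub_self,
      Real.zero_rpow (by linarith), sub_zero]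
  have e2 : ∫ y in x..a, |x - y| ^ q = (a-x)^(q+1)/(q+1) := by
    have hcg : ∫ y in x..a, |x - y| ^ q = ∫ y in x..a, (y - x) ^ q := by
      apply intervalIntegral.integral_congr
      intro y hy
      rw [Set.uIcc_of_le hxa] at hy
      simp only
      rw [abs_sub_comm, abs_of_nonneg (by linarith [hy.1])]
    rw [hcg, intervalIntegral.integral_comp_sub_right (fun u => u ^ q) x,
      integral_rpow (Or.inl (by linarith)), sub_self,
      Real.zero_rpow (by linarith), sub_zero]
  rw [e1, e2]; ring

lemma outerW (q a : ℝ) (hq : 1 ≤ q) (ha : 0 ≤ a) :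
    ∫ x in Set.Icc (0:ℝ) a, ((x^(q+1) + (a-x)^(q+1)) / (q+1))
      = 2 * a^(q+2) / ((q+1)*(q+2)) := by
  have hc1 : Continuous (fun x : ℝ => x^(q+1)) :=
    continuous_id.rpow_const (fun _ => Or.inr (by linarith))
  have hc2 : Continuous (fun x : ℝ => (a-x)^(q+1)) :=
    (continuous_const.sub continuous_id).rpow_const (fun _ => Or.inr (by linarith))
  rw [MeasureTheory.integral_Icc_eq_integral_Ioc,
    ← intervalIntegral.integral_of_le ha]
  rw [intervalIntegral.integral_div,
    intervalIntegral.integral_add (hc1.intervalIntegrable _ _) (hc2.intervalIntegrable _ _),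
    intervalIntegral.integral_comp_sub_left (fun u => u ^ (q+1)) a,
    integral_rpow (Or.inl (by linarith)), integral_rpow (Or.inl (by linarith))]
  rw [sub_zero, sub_self, Real.zero_rpow (by linarith)]
  have h1 : q + 1 + 1 = q + 2 := by ring
  rw [h1]
  field_simp
  ring

-- key monotonicity inequality, tight at q = 1
lemma S_ineq (a q : ℝ) (ha : 1 ≤ a) (hq1 : 1 ≤ q) (hq2 : q ≤ 2) :
    a^q * (a/2 + 1/6) ≤ (a+1)^q * (a/2 - 1/3) + (q+2)⁻¹ := by
  have ha0 : (0:ℝ) < a := by linarith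
  have ha1 : (0:ℝ) < a + 1 := by linarith
  set g : ℝ → ℝ := fun t => (a/2 - 1/3) * (a+1)^t + (t+2)⁻¹ - (a/2 + 1/6) * a^t with hgdef
  set g' : ℝ → ℝ := fun t =>
    (a/2 - 1/3) * ((a+1)^t * Real.log (a+1)) - 1/(t+2)^2 - (a/2 + 1/6) * (a^t * Real.log a)
    with hg'def
  have hder : ∀ t : ℝ, t ≠ -2 → HasDerivAt g (g' t) t := by
    intro t ht
    have d1 : HasDerivAt (fun t : ℝ => (a+1)^t) ((a+1)^t * Real.log (a+1)) t :=
      (Real.hasStrictDerivAt_const_rpow ha1 t).hasDerivAt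
    have d2 : HasDerivAt (fun t : ℝ => a^t) (a^t * Real.log a) t :=
      (Real.hasStrictDerivAt_const_rpow ha0 t).hasDerivAt
    have d3 : HasDerivAt (fun t : ℝ => (t+2)⁻¹) (-(1/(t+2)^2)) t := by
      have h4 : HasDerivAt (fun t : ℝ => t + 2) 1 t := (hasDerivAt_id t).add_const 2
      have := h4.inv (by intro h; apply ht; linarith)
      convert this using 1
      show -(1/(t+2)^2) = -1/(t+2)^2
      ring
      all_goals rfl
    have := ((d1.const_mul (a/2 - 1/3)).add d3).sub (d2.const_mul (a/2 + 1/6))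
    convert this using 1
    show (a/2 - 1/3) * ((a+1)^t * Real.log (a+1)) - 1/(t+2)^2 - (a/2 + 1/6) * (a^t * Real.log a) = _
    ring
    all_goals rfl
  -- derivative nonneg on [1,2]
  have hderiv_nonneg : ∀ t, 1 ≤ t → t ≤ 2 → 0 ≤ g' t := by
    intro t ht1 ht2
    set L := Real.log (a+1) with hL
    set M := Real.log a with hM
    have hM0 : 0 ≤ M := Real.log_nonneg ha
    have hM1 : M ≤ a - 1 := by
      have := Real.log_le_sub_one_of_pos ha0; linarith
    have hLM : M + (a+1)⁻¹ ≤ L := by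
      have h5 : Real.log (a/(a+1)) ≤ a/(a+1) - 1 := Real.log_le_sub_one_of_pos (by positivity)
      rw [Real.log_div (ne_of_gt ha0) (ne_of_gt ha1)] at h5
      have h6 : a/(a+1) - 1 = -(a+1)⁻¹ := by field_simp; ring
      rw [h6] at h5
      linarith
    set X := a ^ (t-1) with hX
    set Y := (a+1) ^ (t-1) with hY
    have hX1 : 1 ≤ X := Real.one_le_rpow ha (by linarith)
    have hXY : X ≤ Y := Real.rpow_le_rpow (le_of_lt ha0) (by linarith) (by linarith)
    have hat : a ^ t = X * a := by
      rw [hX, ← Real.rpow_add_one (ne_of_gt ha0)]; ring_nf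
    have hat' : (a+1) ^ t = Y * (a+1) := by
      rw [hY, ← Real.rpow_add_one (ne_of_gt ha1)]; ring_nf
    have hinv : 1/(t+2)^2 ≤ 1/9 := by
      rw [div_le_div_iff₀ (by positivity) (by norm_num)]
      nlinarith
    simp only [hg'def, hat, hat']
    -- lower bound L using hLM
    have step1 : (a/2 - 1/3) * (Y * (a+1) * (M + (a+1)⁻¹)) ≤ (a/2 - 1/3) * (Y * (a+1) * L) := by
      apply mul_le_mul_of_nonneg_left _ (by linarith)
      apply mul_le_mul_of_nonneg_left hLM
      positivity
    have hexp : (a/2 - 1/3) * (Y * (a+1) * (M + (a+1)⁻¹))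
        = (a/2 - 1/3) * (a+1) * M * Y + (a/2 - 1/3) * Y := by
      field_simp
    -- M-terms bracket lower bound
    have step2 : -(M * Y) / 3 ≤ (a/2 - 1/3) * (a+1) * M * Y - (a/2 + 1/6) * (X * a * M) := by
      have hb : (a/2 + 1/6) * (X * a) ≤ (a/2 + 1/6) * (Y * a) := by
        apply mul_le_mul_of_nonneg_left _ (by linarith)
        exact mul_le_mul_of_nonneg_right hXY (le_of_lt ha0)
      nlinarith [mul_le_mul_of_nonneg_right hb hM0]
    have hY1 : 1 ≤ Y := le_trans hX1 hXY
    -- final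
    have step3 : 1/9 ≤ (a/2 - 1/3) * Y - (M * Y) / 3 := by
      have h7 : (1:ℝ)/6 ≤ a/2 - 1/3 - M/3 := by linarith
      have h8 := mul_le_mul hY1 h7 (by norm_num) (by linarith : (0:ℝ) ≤ Y)
      nlinarith
    rw [hexp] at step1
    linarith
  -- monotone on [1,2]
  have hne : ∀ t : ℝ, 1 ≤ t → t ≠ -2 := by
    intro t h1 h; rw [h] at h1; norm_num at h1
  have hmono : MonotoneOn g (Set.Icc (1:ℝ) 2) := by
    apply monotoneOn_of_deriv_nonneg (convex_Icc 1 2)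
    · intro t ht
      exact (hder t (hne t ht.1)).continuousAt.continuousWithinAt
    · intro t ht
      rw [interior_Icc] at ht
      exact (hder t (hne t ht.1.le)).differentiableAt.differentiableWithinAt
    · intro t ht
      rw [interior_Icc] at ht
      rw [(hder t (hne t ht.1.le)).deriv]
      exact hderiv_nonneg t (le_of_lt ht.1) (le_of_lt ht.2)
  have hg1 : g 1 = 0 := by
    simp only [hgdef, Real.rpow_one]
    norm_num
    ring
  have := hmono (Set.mem_Icc.mpr ⟨le_refl 1, by norm_num⟩) (Set.mem_Icc.mpr ⟨hq1, hq2⟩) hq1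
  rw [hg1] at this
  simp only [hgdef] at this
  linarith

lemma T_ineq (a q : ℝ) (ha : 1 ≤ a) (hq1 : 1 ≤ q) (hq2 : q ≤ 2) :
    ((a+1)^(q+2) - a^(q+2) - 1) / (q+2) ≤ a * (a+1)^q := by
  have ha0 : (0:ℝ) < a := by linarith
  have ha1 : (0:ℝ) < a + 1 := by linarith
  -- B as an integral
  have hB : ((a+1)^(q+2) - a^(q+2)) / (q+2) = ∫ u in a..(a+1), u^(q+1) := by
    rw [integral_rpow (Or.inl (by linarith))]
    have : q + 1 + 1 = q + 2 := by ring
    rw [this]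
  -- pointwise convexity bound on [a, a+1]
  have hpt : ∀ u ∈ Set.Icc a (a+1),
      u^(q+1) ≤ (u^2 - a*u) * (a+1)^q + ((a+1)*u - u^2) * a^q := by
    intro u hu
    obtain ⟨hua, hub⟩ := hu
    have hu0 : (0:ℝ) < u := lt_of_lt_of_le ha0 hua
    have hconv := (convexOn_rpow hq1).2 (Set.mem_Ici.mpr (le_of_lt ha0))
      (Set.mem_Ici.mpr (le_of_lt ha1)) (by linarith : (0:ℝ) ≤ a + 1 - u)
      (by linarith : (0:ℝ) ≤ u - a) (by ring : (a + 1 - u) + (u - a) = 1)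
    simp only [smul_eq_mul] at hconv
    have heq : (a + 1 - u) * a + (u - a) * (a + 1) = u := by ring
    rw [heq] at hconv
    have hmul := mul_le_mul_of_nonneg_left hconv (le_of_lt hu0)
    have huq : u ^ (q+1) = u * u ^ q := by
      rw [Real.rpow_add_one (ne_of_gt hu0)]; ring
    rw [huq]
    calc u * u ^ q ≤ u * ((a + 1 - u) * a ^ q + (u - a) * (a + 1) ^ q) := hmul
      _ = (u^2 - a*u) * (a+1)^q + ((a+1)*u - u^2) * a ^ q := by ring
  -- integrate the bound
  have hint : ∫ u in a..(a+1), u^(q+1)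
      ≤ ∫ u in a..(a+1), ((u^2 - a*u) * (a+1)^q + ((a+1)*u - u^2) * a^q) := by
    apply intervalIntegral.integral_mono_on (by linarith)
    · exact (continuous_id.rpow_const (fun _ => Or.inr (by linarith))).intervalIntegrable _ _
    · apply Continuous.intervalIntegrable
      exact (((continuous_pow 2).sub (continuous_const.mul continuous_id)).mul continuous_const).add
        (((continuous_const.mul continuous_id).sub (continuous_pow 2)).mul continuous_const)
    · exact hpt
  -- compute RHS integral
  have hrhs : ∫ u in a..(a+1), ((u^2 - a*u) * (a+1)^q + ((a+1)*u - u^2) * a^q)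
      = (a/2 + 1/3) * (a+1)^q + (a/2 + 1/6) * a^q := by
    have i1 : IntervalIntegrable (fun u : ℝ => (u^2 - a*u) * (a+1)^q) volume a (a+1) :=
      ((((continuous_pow 2).sub (continuous_const.mul continuous_id)).mul continuous_const)).intervalIntegrable _ _
    have i2 : IntervalIntegrable (fun u : ℝ => ((a+1)*u - u^2) * a^q) volume a (a+1) :=
      ((((continuous_const.mul continuous_id).sub (continuous_pow 2)).mul continuous_const)).intervalIntegrable _ _
    rw [intervalIntegral.integral_add i1 i2]
    rw [intervalIntegral.integral_mul_const, intervalIntegral.integral_mul_const]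
    have i3 : IntervalIntegrable (fun u : ℝ => u^2) volume a (a+1) :=
      (continuous_pow 2).intervalIntegrable _ _
    have i4 : IntervalIntegrable (fun u : ℝ => a*u) volume a (a+1) :=
      (continuous_const.mul continuous_id).intervalIntegrable _ _
    have i5 : IntervalIntegrable (fun u : ℝ => (a+1)*u) volume a (a+1) :=
      (continuous_const.mul continuous_id).intervalIntegrable _ _
    rw [intervalIntegral.integral_sub i3 i4, intervalIntegral.integral_sub i5 i3,
      intervalIntegral.integral_const_mul, intervalIntegral.integral_const_mul,
      integral_id, integral_pow]
    ring
  rw [hrhs] at hint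
  rw [← hB] at hint
  have hS := S_ineq a q ha hq1 hq2
  have hq2pos : (0:ℝ) < q + 2 := by linarith
  have h9 : ((a+1)^(q+2) - a^(q+2) - 1)/(q+2) = ((a+1)^(q+2) - a^(q+2))/(q+2) - (q+2)⁻¹ := by
    field_simp
  rw [h9]
  nlinarith [hint, hS]

theorem stmt_10 (qa qr : ℝ) (h1 : 1 ≤ qa) (h2 : qa < qr) (h3 : qr ≤ 2)
    (ω : Measure ℝ) (hω : ω = volume.restrict (Set.Icc (-1 : ℝ) 0))
    (μ : ℕ → Measure ℝ)
    (hμ : ∀ n, μ n = ((n : ℝ≥0∞))⁻¹ • volume.restrict (Set.Icc (0 : ℝ) (n : ℝ)))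
    (V W E : ℕ → ℝ)
    (hV : ∀ n, V n = ∫ y, ∫ x, |x - y| ^ qa ∂ω ∂(μ n))
    (hW : ∀ n, W n = -(1 / 2) * ∫ x, ∫ y, |x - y| ^ qr ∂(μ n) ∂(μ n))
    (hE : ∀ n, E n = V n + W n) :
    (∀ n : ℕ, 1 ≤ n → V n ≤ ((n : ℝ) + 1) ^ qa / (qa + 1)) ∧
    (∀ n : ℕ, 1 ≤ n → W n = -((n : ℝ) ^ qr / ((qr + 1) * (qr + 2)))) ∧
    Tendsto E atTop atBot ∧
    ¬ ∃ ν : Measure ℝ, IsProbabilityMeasure ν ∧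
        ∀ ν' : Measure ℝ, IsProbabilityMeasure ν' →
          ((∫ y, ∫ x, |x - y| ^ qa ∂ω ∂ν) - (1 / 2) * ∫ x, ∫ y, |x - y| ^ qr ∂ν ∂ν)
            ≤ ((∫ y, ∫ x, |x - y| ^ qa ∂ω ∂ν') -
                (1 / 2) * ∫ x, ∫ y, |x - y| ^ qr ∂ν' ∂ν') := by
  have hqa2 : qa ≤ 2 := le_trans (le_of_lt h2) h3
  have hqr1 : 1 ≤ qr := le_trans h1 (le_of_lt h2)
  -- generic reduction of μ n integrals to set integrals
  have key : ∀ (n : ℕ) (f : ℝ → ℝ),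
      ∫ y, f y ∂(μ n) = ((n:ℝ))⁻¹ * ∫ y in Set.Icc (0:ℝ) (n:ℝ), f y := by
    intro n f
    rw [hμ n, integral_smul_measure, smul_eq_mul, ENNReal.toReal_inv, ENNReal.toReal_natCast]
  -- V formula
  have hVval : ∀ n : ℕ, 1 ≤ n →
      V n = ((n:ℝ))⁻¹ * ((((n:ℝ)+1)^(qa+2) - ((n:ℝ))^(qa+2) - 1) / ((qa+1)*(qa+2))) := by
    intro n hn
    have ha0 : (0:ℝ) ≤ (n:ℝ) := Nat.cast_nonneg n
    rw [hV n, key n, hω]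
    congr 1
    rw [setIntegral_congr_fun measurableSet_Icc
      (fun y hy => innerV qa y h1 hy.1)]
    exact V_val qa _ h1 ha0
  -- V bound
  have hVbd : ∀ n : ℕ, 1 ≤ n → V n ≤ ((n : ℝ) + 1) ^ qa / (qa + 1) := by
    intro n hn
    have ha : (1:ℝ) ≤ (n:ℝ) := by exact_mod_cast hn
    have ha0 : (0:ℝ) < (n:ℝ) := by linarith
    have hT := T_ineq (n:ℝ) qa ha h1 hqa2
    have hc1 : qa + 1 ≠ 0 := by linarith
    have hc2 : qa + 2 ≠ 0 := by linarith
    have hn0 : ((n:ℝ)) ≠ 0 := ne_of_gt ha0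
    rw [hVval n hn]
    calc ((n:ℝ))⁻¹ * ((((n:ℝ)+1)^(qa+2) - ((n:ℝ))^(qa+2) - 1) / ((qa+1)*(qa+2)))
        = ((((n:ℝ)+1)^(qa+2) - ((n:ℝ))^(qa+2) - 1) / (qa+2)) / ((n:ℝ)*(qa+1)) := by
          field_simp
      _ ≤ ((n:ℝ) * ((n:ℝ)+1)^qa) / ((n:ℝ)*(qa+1)) := by
          rw [div_le_div_iff_of_pos_right (by nlinarith : (0:ℝ) < (n:ℝ)*(qa+1))]
          exact hT
      _ = ((n : ℝ) + 1) ^ qa / (qa + 1) := by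
          rw [mul_div_mul_left _ _ (ne_of_gt ha0)]
  -- W formula
  have hWval : ∀ n : ℕ, 1 ≤ n → W n = -(((n:ℝ))^qr / ((qr+1)*(qr+2))) := by
    intro n hn
    have ha : (1:ℝ) ≤ (n:ℝ) := by exact_mod_cast hn
    have ha0 : (0:ℝ) < (n:ℝ) := by linarith
    rw [hW n, key n]
    have hin : Set.EqOn (fun x => ∫ y, |x - y| ^ qr ∂(μ n))
        (fun x => ((n:ℝ))⁻¹ * ((x^(qr+1) + ((n:ℝ)-x)^(qr+1)) / (qr+1)))
        (Set.Icc (0:ℝ) (n:ℝ)) := by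
      intro x hx
      simp only
      rw [key n, innerW qr (n:ℝ) x hqr1 hx]
    rw [setIntegral_congr_fun measurableSet_Icc hin]
    rw [MeasureTheory.integral_const_mul]
    rw [outerW qr (n:ℝ) hqr1 (le_of_lt ha0)]
    have hsplit : ((n:ℝ))^(qr+2) = (n:ℝ)^qr * ((n:ℝ)*(n:ℝ)) := by
      rw [Real.rpow_add ha0]
      rw [show ((2:ℝ)) = ((2:ℕ):ℝ) from by norm_num, Real.rpow_natCast]
      ring
    rw [hsplit]
    have hc1 : qr + 1 ≠ 0 := by linarith
    have hc2 : qr + 2 ≠ 0 := by linarith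
    have hn0 : ((n:ℝ)) ≠ 0 := ne_of_gt ha0
    field_simp
  -- probability measure
  have hprob : ∀ n : ℕ, 1 ≤ n → IsProbabilityMeasure (μ n) := by
    intro n hn
    constructor
    rw [hμ n, Measure.smul_apply, Measure.restrict_apply MeasurableSet.univ, Set.univ_inter,
      Real.volume_Icc, smul_eq_mul, sub_zero, ENNReal.ofReal_natCast]
    exact ENNReal.inv_mul_cancel (Nat.cast_ne_zero.mpr (by omega)) (ENNReal.natCast_ne_top n)
  -- eventual bound on E
  have hEbd : ∀ᶠ n : ℕ in atTop, E n ≤ -(4*(n:ℝ)) := by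
    have htt : Tendsto (fun n : ℕ => ((n:ℝ))^(qr-qa)) atTop atTop :=
      (tendsto_rpow_atTop (by linarith)).comp tendsto_natCast_atTop_atTop
    filter_upwards [eventually_ge_atTop 1, htt.eventually_ge_atTop 96] with n hn h96
    have ha : (1:ℝ) ≤ (n:ℝ) := by exact_mod_cast hn
    have ha0 : (0:ℝ) < (n:ℝ) := by linarith
    have hV' := hVbd n hn
    have hW' := hWval n hn
    set b := (n:ℝ) with hb
    have hbqa : (0:ℝ) ≤ b^qa := Real.rpow_nonneg (le_of_lt ha0) qa
    have hbqr : (0:ℝ) ≤ b^qr := Real.rpow_nonneg (le_of_lt ha0) qr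
    have e1 : (b+1)^qa ≤ 4 * b^qa := by
      calc (b+1)^qa ≤ (2*b)^qa := Real.rpow_le_rpow (by linarith) (by linarith) (by linarith)
        _ = 2^qa * b^qa := Real.mul_rpow (by norm_num) (le_of_lt ha0)
        _ ≤ 4 * b^qa := by
            have h2qa : (2:ℝ)^qa ≤ 2^(2:ℝ) := Real.rpow_le_rpow_of_exponent_le one_le_two hqa2
            have h4 : (2:ℝ)^(2:ℝ) = 4 := by
              rw [show ((2:ℝ)) = ((2:ℕ):ℝ) from by norm_num, Real.rpow_natCast]; norm_num
            nlinarith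
    have e2 : (b+1)^qa/(qa+1) ≤ 4*b^qa := by
      have h5 : (b+1)^qa/(qa+1) ≤ (b+1)^qa/1 :=
        div_le_div_of_nonneg_left (by positivity) (by norm_num) (by linarith)
      rw [div_one] at h5
      linarith
    have e3 : 96 * b^qa ≤ b^qr := by
      have h6 : b^qr = b^qa * b^(qr-qa) := by rw [← Real.rpow_add ha0]; ring_nf
      rw [h6]
      nlinarith [h96]
    have e4 : b^qr/12 ≤ b^qr/((qr+1)*(qr+2)) :=
      div_le_div_of_nonneg_left hbqr (by nlinarith) (by nlinarith)
    have e5 : b ≤ b^qa := by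
      have := Real.rpow_le_rpow_of_exponent_le ha h1
      rwa [Real.rpow_one] at this
    rw [hE n]
    rw [hW']
    linarith
  have htendsto : Tendsto E atTop atBot := by
    apply tendsto_atBot_mono' atTop hEbd
    have h7 : Tendsto (fun n : ℕ => (4:ℝ)*(n:ℝ)) atTop atTop :=
      tendsto_natCast_atTop_atTop.const_mul_atTop (by norm_num)
    exact tendsto_neg_atTop_atBot.comp h7
  refine ⟨hVbd, hWval, htendsto, ?_⟩
  rintro ⟨ν, hν, hmin⟩
  set c := (∫ y, ∫ x, |x - y| ^ qa ∂ω ∂ν) - (1 / 2) * ∫ x, ∫ y, |x - y| ^ qr ∂ν ∂ν with hc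
  have hub : ∀ n : ℕ, 1 ≤ n → c ≤ E n := by
    intro n hn
    have h8 := hmin (μ n) (hprob n hn)
    rw [hE n, hV n, hW n]
    linarith
  obtain ⟨n, hn1, hn2⟩ := ((htendsto.eventually (eventually_le_atBot (c - 1))).and
    (eventually_ge_atTop 1)).exists
  have := hub n hn2
  linarith
end
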